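/- For every integer N ≥ 2, the minimum over all placements of two controllers at distinct positions a ≠ b in {1,…,N} of the total switch-to-controller delay ∑_{i=1}^{N} min(|i − a|, |i − b|) equals the minimum over integer split points t with 1 ≤ t ≤ N − 1 of ⌊t²/4⌋ + ⌊(N − t)²/4⌋. -/

import Mathlib

lemma peel2 (p q : ℤ) (h : p < q) (f : ℤ → ℤ) :
    ∑ i ∈ Finset.Icc p q, f i = f p + f q + ∑ i ∈ Finset.Icc (p+1) (q-1), f i := by
  have h1 : Finset.Icc p q = insert p (insert q (Finset.Icc (p+1) (q-1))) := by
    ext i; simp only [Finset.mem_Icc, Finset.mem_insert]; omega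
  rw [h1, Finset.sum_insert (by simp only [Finset.mem_insert, Finset.mem_Icc]; omega),
    Finset.sum_insert (by simp only [Finset.mem_Icc]; omega)]
  ring

lemma split_sum (a b c : ℤ) (h1 : a ≤ b + 1) (h2 : b ≤ c) (f : ℤ → ℤ) :
    ∑ i ∈ Finset.Icc a c, f i = ∑ i ∈ Finset.Icc a b, f i + ∑ i ∈ Finset.Icc (b+1) c, f i := by
  rw [← Finset.sum_union (by simp only [Finset.disjoint_left, Finset.mem_Icc]; omega)]
  congr 1
  ext i; simp only [Finset.mem_Icc, Finset.mem_union]; omega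

lemma sum_abs_lb : ∀ (m : ℕ) (p c : ℤ),
    (m:ℤ)^2 - (m:ℤ)%2 ≤ 4 * ∑ i ∈ Finset.Icc p (p + m - 1), |i - c| := by
  intro m
  induction m using Nat.strong_induction_on with
  | _ m ih =>
    match m with
    | 0 => intro p c; norm_num
    | 1 => intro p c
           have : (p : ℤ) + (1:ℕ) - 1 = p := by push_cast; ring
           rw [this]
           simp
    | (n+2) =>
      intro p c
      have hint : p + ((n:ℤ)+2) - 1 = p + n + 1 := by ring
      have h2 : (p:ℤ) + 1 + (n:ℤ) - 1 = p + n := by ring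
      have key := ih n (by omega) (p+1) c
      rw [h2] at key
      push_cast [hint]
      rw [peel2 p (p + n + 1) (by omega), show p + (n:ℤ) + 1 - 1 = p + n by ring]
      have htri : (n:ℤ) + 1 ≤ |p - c| + |p + n + 1 - c| := by
        have := abs_sub (p + (n:ℤ) + 1 - c) (p - c)
        have h3 : |p + (n:ℤ) + 1 - c - (p - c)| = (n:ℤ)+1 := by
          rw [show p + (n:ℤ) + 1 - c - (p - c) = (n:ℤ)+1 by ring]
          exact abs_of_nonneg (by positivity)
        linarith [abs_sub_abs_le_abs_sub (p + (n:ℤ) + 1 - c) (p - c), abs_add_le (p + (n:ℤ) + 1 - c) (-(p-c))]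
      have hmod : ((n:ℤ)+2) % 2 = (n:ℤ) % 2 := by omega
      push_cast at key
      nlinarith [key, htri]

lemma sum_abs_ub : ∀ (m : ℕ) (p : ℤ),
    4 * ∑ i ∈ Finset.Icc p (p + m - 1), |i - (p + (m:ℤ)/2)| ≤ (m:ℤ)^2 - (m:ℤ)%2 := by
  intro m
  induction m using Nat.strong_induction_on with
  | _ m ih =>
    match m with
    | 0 => intro p; norm_num
    | 1 => intro p
           rw [show (p:ℤ) + (1:ℕ) - 1 = p by push_cast; ring]
           norm_num
    | (n+2) =>
      intro p
      have key := ih n (by omega) (p+1)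
      rw [show (p:ℤ) + 1 + (n:ℕ) - 1 = p + n by push_cast; ring] at key
      have hc : (p:ℤ) + 1 + (n:ℤ)/2 = p + ((n:ℤ)+2)/2 := by omega
      rw [hc] at key
      push_cast
      rw [show p + ((n:ℤ)+2) - 1 = p + (n:ℤ) + 1 by ring]
      rw [peel2 p (p + n + 1) (by omega), show p + (n:ℤ) + 1 - 1 = p + n by ring]
      have e1 : |p - (p + ((n:ℤ)+2)/2)| = ((n:ℤ)+2)/2 := by
        rw [show p - (p + ((n:ℤ)+2)/2) = -(((n:ℤ)+2)/2) by ring, abs_neg]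
        exact abs_of_nonneg (by omega)
      have e2 : |p + (n:ℤ) + 1 - (p + ((n:ℤ)+2)/2)| = (n:ℤ) + 1 - ((n:ℤ)+2)/2 := by
        rw [show p + (n:ℤ) + 1 - (p + ((n:ℤ)+2)/2) = (n:ℤ) + 1 - ((n:ℤ)+2)/2 by ring]
        exact abs_of_nonneg (by omega)
      push_cast at key ⊢
      rw [e1, e2]
      have hmod : ((n:ℤ)+2) % 2 = (n:ℤ) % 2 := by omega
      have hdd : ((n:ℤ)+2)/2 + ((n:ℤ) + 1 - ((n:ℤ)+2)/2) = (n:ℤ)+1 := by ring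
      nlinarith [key]

lemma sq_emod4 (t : ℤ) : t^2 % 4 = t % 2 := by
  rcases Int.even_or_odd t with ⟨k, hk⟩ | ⟨k, hk⟩
  · obtain ⟨j, hj⟩ : ∃ j, t^2 = 4*j := ⟨k^2, by rw [hk]; ring⟩
    generalize hs : t^2 = s at hj
    omega
  · obtain ⟨j, hj⟩ : ∃ j, t^2 = 4*j+1 := ⟨k^2+k, by rw [hk]; ring⟩
    generalize hs : t^2 = s at hj
    omega

lemma four_mul_ediv4 (t : ℤ) : 4 * (t^2/4) = t^2 - t%2 := by
  have h := sq_emod4 t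
  have h2 := Int.mul_ediv_add_emod (t^2) 4
  omega

lemma lbZ (p q c : ℤ) (h : p - 1 ≤ q) :
    (q + 1 - p)^2 / 4 ≤ ∑ i ∈ Finset.Icc p q, |i - c| := by
  have hm : ((q + 1 - p).toNat : ℤ) = q + 1 - p := Int.toNat_of_nonneg (by omega)
  have key := sum_abs_lb (q + 1 - p).toNat p c
  rw [hm, show p + (q + 1 - p) - 1 = q by ring] at key
  have h4 := four_mul_ediv4 (q + 1 - p)
  linarith

lemma ubZ (p q : ℤ) (h : p - 1 ≤ q) :
    ∑ i ∈ Finset.Icc p q, |i - (p + (q + 1 - p)/2)| ≤ (q + 1 - p)^2 / 4 := by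
  have hm : ((q + 1 - p).toNat : ℤ) = q + 1 - p := Int.toNat_of_nonneg (by omega)
  have key := sum_abs_ub (q + 1 - p).toNat p
  rw [hm, show p + (q + 1 - p) - 1 = q by ring] at key
  have h4 := four_mul_ediv4 (q + 1 - p)
  linarith

/-- For every integer `N ≥ 2`, the minimum over all placements of two
controllers at distinct positions `a ≠ b` in `{1,…,N}` of the total
switch-to-controller delay `∑_{i=1}^{N} min |i − a| |i − b|` equals the
minimum over split points `t` with `1 ≤ t ≤ N − 1` of
`⌊t²/4⌋ + ⌊(N − t)²/4⌋`. -/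
theorem stmt4 (N : ℤ) (hN : 2 ≤ N) :
    sInf {s : ℤ | ∃ a b : ℤ, 1 ≤ a ∧ a ≤ N ∧ 1 ≤ b ∧ b ≤ N ∧ a ≠ b ∧
        s = ∑ i ∈ Finset.Icc (1 : ℤ) N, min |i - a| |i - b|} =
    sInf {s : ℤ | ∃ t : ℤ, 1 ≤ t ∧ t ≤ N - 1 ∧
        s = t ^ 2 / 4 + (N - t) ^ 2 / 4} := by
  set S1 := {s : ℤ | ∃ a b : ℤ, 1 ≤ a ∧ a ≤ N ∧ 1 ≤ b ∧ b ≤ N ∧ a ≠ b ∧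
      s = ∑ i ∈ Finset.Icc (1 : ℤ) N, min |i - a| |i - b|} with hS1
  set S2 := {s : ℤ | ∃ t : ℤ, 1 ≤ t ∧ t ≤ N - 1 ∧
      s = t ^ 2 / 4 + (N - t) ^ 2 / 4} with hS2
  have bdd1 : BddBelow S1 := by
    refine ⟨0, ?_⟩
    rintro s ⟨a, b, _, _, _, _, _, rfl⟩
    exact Finset.sum_nonneg fun i _ => le_min (abs_nonneg _) (abs_nonneg _)
  have bdd2 : BddBelow S2 := by
    refine ⟨0, ?_⟩
    rintro s ⟨t, _, _, rfl⟩
    exact add_nonneg (Int.ediv_nonneg (sq_nonneg t) (by norm_num))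
      (Int.ediv_nonneg (sq_nonneg (N - t)) (by norm_num))
  have ne1 : S1.Nonempty :=
    ⟨∑ i ∈ Finset.Icc (1 : ℤ) N, min |i - 1| |i - 2|,
      1, 2, le_refl 1, by omega, by norm_num, by omega, by norm_num, rfl⟩
  have ne2 : S2.Nonempty := ⟨1 ^ 2 / 4 + (N - 1) ^ 2 / 4, 1, le_refl 1, by omega, rfl⟩
  apply le_antisymm
  · apply le_csInf ne2
    rintro s ⟨t, ht1, ht2, rfl⟩
    set a := 1 + t / 2 with hadef
    set b := (t + 1) + (N - t) / 2 with hbdef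
    have haR : 1 ≤ a ∧ a ≤ t := by constructor <;> omega
    have hbR : t + 1 ≤ b ∧ b ≤ N := by constructor <;> omega
    have hmem : (∑ i ∈ Finset.Icc (1 : ℤ) N, min |i - a| |i - b|) ∈ S1 :=
      ⟨a, b, by omega, by omega, by omega, by omega, by omega, rfl⟩
    refine le_trans (csInf_le bdd1 hmem) ?_
    rw [split_sum 1 t N (by omega) (by omega)]
    have L1 : ∑ i ∈ Finset.Icc (1 : ℤ) t, min |i - a| |i - b|
        ≤ ∑ i ∈ Finset.Icc (1 : ℤ) t, |i - a| :=
      Finset.sum_le_sum fun i _ => min_le_left _ _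
    have L2 := ubZ 1 t (by omega)
    rw [show t + 1 - (1:ℤ) = t by ring] at L2
    have R1 : ∑ i ∈ Finset.Icc (t + 1 : ℤ) N, min |i - a| |i - b|
        ≤ ∑ i ∈ Finset.Icc (t + 1 : ℤ) N, |i - b| :=
      Finset.sum_le_sum fun i _ => min_le_right _ _
    have R2 := ubZ (t + 1) N (by omega)
    rw [show N + 1 - (t + 1 : ℤ) = N - t by ring] at R2
    linarith
  · apply le_csInf ne1
    have key : ∀ a b : ℤ, 1 ≤ a → a ≤ N → 1 ≤ b → b ≤ N → a < b →
        sInf S2 ≤ ∑ i ∈ Finset.Icc (1 : ℤ) N, min |i - a| |i - b| := by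
      intro a b ha1 ha2 hb1 hb2 hab
      set t := (a + b) / 2 with htdef
      have ht : 2 * t ≤ a + b ∧ a + b < 2 * t + 2 := by constructor <;> omega
      have ht1 : 1 ≤ t := by omega
      have ht2 : t ≤ N - 1 := by omega
      refine le_trans (csInf_le bdd2 ⟨t, ht1, ht2, rfl⟩) ?_
      rw [split_sum 1 t N (by omega) (by omega)]
      have L1 : ∑ i ∈ Finset.Icc (1 : ℤ) t, |i - a|
          ≤ ∑ i ∈ Finset.Icc (1 : ℤ) t, min |i - a| |i - b| := by
        refine Finset.sum_le_sum fun i hi => ?_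
        simp only [Finset.mem_Icc] at hi
        refine le_min le_rfl ?_
        rcases abs_cases (i - a) with ⟨e1, f1⟩ | ⟨e1, f1⟩ <;>
          rcases abs_cases (i - b) with ⟨e2, f2⟩ | ⟨e2, f2⟩ <;> rw [e1, e2] <;> omega
      have L2 := lbZ 1 t a (by omega)
      rw [show t + 1 - (1:ℤ) = t by ring] at L2
      have R1 : ∑ i ∈ Finset.Icc (t + 1 : ℤ) N, |i - b|
          ≤ ∑ i ∈ Finset.Icc (t + 1 : ℤ) N, min |i - a| |i - b| := by
        refine Finset.sum_le_sum fun i hi => ?_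
        simp only [Finset.mem_Icc] at hi
        refine le_min ?_ le_rfl
        rcases abs_cases (i - a) with ⟨e1, f1⟩ | ⟨e1, f1⟩ <;>
          rcases abs_cases (i - b) with ⟨e2, f2⟩ | ⟨e2, f2⟩ <;> rw [e1, e2] <;> omega
      have R2 := lbZ (t + 1) N b (by omega)
      rw [show N + 1 - (t + 1 : ℤ) = N - t by ring] at R2
      linarith
    rintro s ⟨a, b, ha1, ha2, hb1, hb2, hab, rfl⟩
    rcases lt_or_gt_of_ne hab with h | h
    · exact key a b ha1 ha2 hb1 hb2 h
    · have := key b a hb1 hb2 ha1 ha2 h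
      rwa [Finset.sum_congr rfl fun i _ => min_comm |i - b| |i - a|] at this
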